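/- Let Q and n be positive integers, let ψ be a Dirichlet character modulo Q, and let s ∈ ℂ with Re(s) > 1/2. Then Σ_{C ≥ 1, gcd(C,Q)=1} ψ(C) r_C(n) C^{-2s} = (Σ_{δ | n, gcd(δ,Q)=1} ψ(δ) δ^{1-2s}) · Π_{p prime, p ∤ Q} (1 − ψ(p) p^{-2s}), where the series on the left converges absolutely and the infinite product on the right converges. -/

import Mathlib

open scoped BigOperators

/-- `e(x) = exp(2πix)`. -/
noncomputable def e2 (x : ℝ) : ℂ := Complex.exp (2 * Real.pi * Complex.I * x)

lemma e2_int (k : ℤ) : e2 k = 1 := by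
  rw [e2, show ((2:ℂ) * Real.pi * Complex.I * (k:ℝ)) = (k:ℤ) * (2 * Real.pi * Complex.I) by
    push_cast; ring]
  exact Complex.exp_int_mul_two_pi_mul_I k

lemma e2_pow (t : ℕ) (x : ℝ) : e2 x ^ t = e2 (t * x) := by
  rw [e2, e2, ← Complex.exp_nat_mul]
  push_cast
  ring_nf

lemma e2_eq_one_iff (a : ℤ) (M : ℕ) (hM : 0 < M) : e2 ((a : ℝ) / M) = 1 ↔ (M : ℤ) ∣ a := by
  rw [e2, Complex.exp_eq_one_iff]
  constructor
  · rintro ⟨k, hk⟩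
    rw [show ((2:ℂ) * Real.pi * Complex.I * ((a:ℝ)/M : ℝ)) = (((a:ℝ)/M : ℝ) : ℂ) * (2 * Real.pi * Complex.I) by push_cast; ring] at hk
    have := mul_right_cancel₀ Complex.two_pi_I_ne_zero hk
    have h2 : ((a:ℝ)/M : ℝ) = (k : ℝ) := by exact_mod_cast this
    refine ⟨k, ?_⟩
    have hM' : (M : ℝ) ≠ 0 := by positivity
    field_simp at h2
    rw [mul_comm] at h2
    rw [mul_comm]; exact_mod_cast h2
  · rintro ⟨k, rfl⟩
    refine ⟨k, ?_⟩
    have hM' : (M : ℝ) ≠ 0 := by positivity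
    push_cast
    have hMc : (M:ℂ) ≠ 0 := by exact_mod_cast hM'
    field_simp

lemma sum_e2 (M : ℕ) (hM : 0 < M) (a : ℤ) :
    ∑ t ∈ Finset.range M, e2 (((a * t : ℤ) : ℝ) / M) = if (M:ℤ) ∣ a then (M : ℂ) else 0 := by
  have hterm : ∀ t : ℕ, e2 (((a * t : ℤ) : ℝ) / M) = e2 ((a:ℝ)/M) ^ t := by
    intro t
    rw [e2_pow]
    congr 1
    push_cast
    ring
  simp_rw [hterm]
  by_cases h : (M:ℤ) ∣ a
  · rw [if_pos h]
    rw [(e2_eq_one_iff a M hM).2 h]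
    simp
  · rw [if_neg h]
    have hne : e2 ((a:ℝ)/M) ≠ 1 := fun hc => h ((e2_eq_one_iff a M hM).1 hc)
    rw [geom_sum_eq hne]
    rw [e2_pow]
    have : ((M:ℕ):ℝ) * ((a:ℝ)/M) = ((a:ℤ):ℝ) := by
      have hM' : (M : ℝ) ≠ 0 := by positivity
      field_simp
    rw [this, e2_int]
    simp

/-- The Ramanujan sum `r_C(n) = Σ_{d mod C, (d,C)=1} e(−nd/C)`. -/
noncomputable def ramanujanSum (C : ℕ) (n : ℤ) : ℂ :=
  ∑ d ∈ (Finset.range C).filter (fun d => Nat.Coprime d C),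
    e2 (((-(n * d) : ℤ) : ℝ) / C)

open ArithmeticFunction in
lemma moebius_sum_divisors (k : ℕ) :
    ∑ g ∈ k.divisors, ((moebius g : ℤ) : ℂ) = if k = 1 then 1 else 0 := by
  have h := congrArg (fun f : ArithmeticFunction ℤ => f k) moebius_mul_coe_zeta
  simp only [coe_mul_zeta_apply, one_apply] at h
  have : ((∑ g ∈ k.divisors, (moebius g : ℤ) : ℤ) : ℂ) = ((if k = 1 then 1 else 0 : ℤ) : ℂ) := by
    exact_mod_cast congrArg (fun z : ℤ => (z : ℂ)) h
  simpa [Int.cast_sum] using this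

open ArithmeticFunction in
lemma ramanujanSum_eq_sum (C : ℕ) (hC : 0 < C) (n : ℕ) :
    ramanujanSum C (n : ℤ) =
      ∑ g ∈ C.divisors, (moebius g : ℂ) * (if (C / g) ∣ n then ((C / g : ℕ) : ℂ) else 0) := by
  rw [ramanujanSum, Finset.sum_filter]
  have step1 : ∀ d ∈ Finset.range C,
      (if Nat.Coprime d C then e2 (((-(n * d) : ℤ) : ℝ) / C) else 0) =
      ∑ g ∈ C.divisors, (if g ∣ d then (moebius g : ℂ) else 0) * e2 (((-(n * d) : ℤ) : ℝ) / C) := by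
    intro d _
    rw [← Finset.sum_mul]
    have hgcd : (Nat.gcd d C).divisors = C.divisors.filter (· ∣ d) := by
      ext g
      simp only [Nat.mem_divisors, Finset.mem_filter]
      constructor
      · rintro ⟨hg, hne⟩
        exact ⟨⟨hg.trans (Nat.gcd_dvd_right _ _), hC.ne'⟩, hg.trans (Nat.gcd_dvd_left _ _)⟩
      · rintro ⟨⟨hgC, _⟩, hgd⟩
        exact ⟨Nat.dvd_gcd hgd hgC, Nat.ne_of_gt (Nat.gcd_pos_of_pos_right d hC)⟩
    have : (∑ g ∈ C.divisors, if g ∣ d then (moebius g : ℂ) else 0)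
        = if Nat.Coprime d C then 1 else 0 := by
      rw [← Finset.sum_filter, ← hgcd, moebius_sum_divisors]
    rw [this]
    split <;> simp
  rw [Finset.sum_congr rfl step1, Finset.sum_comm]
  refine Finset.sum_congr rfl fun g hg => ?_
  obtain ⟨hgC, _⟩ := Nat.mem_divisors.mp hg
  have hgpos : 0 < g := Nat.pos_of_dvd_of_pos hgC hC
  set M := C / g with hM
  have hMpos : 0 < M := Nat.div_pos (Nat.le_of_dvd hC hgC) hgpos
  have hCM : C = g * M := (Nat.mul_div_cancel' hgC).symm
  simp only [ite_mul, zero_mul]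
  rw [← Finset.sum_filter]
  have himg : (Finset.range C).filter (fun d => g ∣ d) = (Finset.range M).image (fun t => g * t) := by
    ext d
    simp only [Finset.mem_filter, Finset.mem_range, Finset.mem_image]
    constructor
    · rintro ⟨hdC, t, rfl⟩
      refine ⟨t, ?_, rfl⟩
      rw [hCM] at hdC
      exact Nat.lt_of_mul_lt_mul_left hdC
    · rintro ⟨t, ht, rfl⟩
      refine ⟨?_, ⟨t, rfl⟩⟩
      rw [hCM]
      exact mul_lt_mul_of_pos_left ht hgpos
  rw [himg, Finset.sum_image (fun x _ y _ h => Nat.eq_of_mul_eq_mul_left hgpos h)]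
  have harg : ∀ t : ℕ, e2 (((-((n:ℤ) * (g * t : ℕ)) : ℤ) : ℝ) / C) =
      e2 ((((-(n:ℤ)) * t : ℤ) : ℝ) / M) := by
    intro t
    congr 1
    have hg0 : (g:ℝ) ≠ 0 := by positivity
    have hM0 : (M:ℝ) ≠ 0 := by positivity
    rw [hCM]
    push_cast
    field_simp
  simp_rw [harg]
  rw [← Finset.mul_sum, sum_e2 M hMpos (-(n:ℤ))]
  congr 1
  simp [Int.dvd_neg, Int.natCast_dvd_natCast]

open ArithmeticFunction in
lemma ramanujanSum_expand (C n : ℕ) (hC : 0 < C) (hn : 0 < n) :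
    ramanujanSum C (n : ℤ) =
      ∑ m ∈ n.divisors, (if m ∣ C then (moebius (C / m) : ℂ) * m else 0) := by
  rw [ramanujanSum_eq_sum C hC n]
  have h1 : ∀ g ∈ C.divisors,
      (moebius g : ℂ) * (if (C / g) ∣ n then ((C / g : ℕ) : ℂ) else 0) =
      (fun m => (moebius (C / m) : ℂ) * (if m ∣ n then (m : ℂ) else 0)) (C / g) := by
    intro g hg
    obtain ⟨hgC, _⟩ := Nat.mem_divisors.mp hg
    simp only [Nat.div_div_self hgC hC.ne']
  rw [Finset.sum_congr rfl h1, Nat.sum_div_divisors C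
    (fun m => (moebius (C / m) : ℂ) * (if m ∣ n then (m : ℂ) else 0))]
  have h2 : C.divisors.filter (· ∣ n) = n.divisors.filter (· ∣ C) := by
    ext m
    simp only [Finset.mem_filter, Nat.mem_divisors]
    constructor
    · rintro ⟨⟨h1', _⟩, h2'⟩; exact ⟨⟨h2', hn.ne'⟩, h1'⟩
    · rintro ⟨⟨h1', _⟩, h2'⟩; exact ⟨⟨h2', hC.ne'⟩, h1'⟩
  calc ∑ m ∈ C.divisors, (moebius (C / m) : ℂ) * (if m ∣ n then (m : ℂ) else 0)
      = ∑ m ∈ C.divisors.filter (· ∣ n), (moebius (C / m) : ℂ) * m := by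
        rw [Finset.sum_filter]
        exact Finset.sum_congr rfl fun m _ => by split <;> simp
    _ = ∑ m ∈ n.divisors.filter (· ∣ C), (moebius (C / m) : ℂ) * m := by rw [h2]
    _ = ∑ m ∈ n.divisors, (if m ∣ C then (moebius (C / m) : ℂ) * m else 0) := by
        rw [Finset.sum_filter]



open ArithmeticFunction in
/-- Evaluation of the Dirichlet series of twisted Ramanujan sums:
for `Re(s) > 1/2`,
`Σ_{(C,Q)=1} ψ(C) r_C(n) C^{-2s}
  = (Σ_{δ∣n, (δ,Q)=1} ψ(δ) δ^{1-2s}) Π_{p ∤ Q} (1 − ψ(p) p^{-2s})`,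
the series converging absolutely and the product converging. -/
theorem ramanujan_dirichlet_series
    (Q n : ℕ) (hQ : 0 < Q) (hn : 0 < n) (ψ : DirichletCharacter ℂ Q)
    (s : ℂ) (hs : 1 / 2 < s.re) :
    Summable (fun C : ℕ => ‖(if 1 ≤ C ∧ Nat.Coprime C Q then
        ψ (C : ZMod Q) * ramanujanSum C (n : ℤ) * (C : ℂ) ^ (-(2 : ℂ) * s) else 0)‖) ∧
    Multipliable (fun p : {p : ℕ // p.Prime ∧ ¬ p ∣ Q} =>
        1 - ψ ((p : ℕ) : ZMod Q) * ((p : ℕ) : ℂ) ^ (-(2 : ℂ) * s)) ∧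
    (∑' C : ℕ, if 1 ≤ C ∧ Nat.Coprime C Q then
        ψ (C : ZMod Q) * ramanujanSum C (n : ℤ) * (C : ℂ) ^ (-(2 : ℂ) * s) else 0) =
      (∑ δ ∈ n.divisors, if Nat.Coprime δ Q then
          ψ (δ : ZMod Q) * (δ : ℂ) ^ ((1 : ℂ) - 2 * s) else 0) *
        ∏' p : {p : ℕ // p.Prime ∧ ¬ p ∣ Q},
          (1 - ψ ((p : ℕ) : ZMod Q) * ((p : ℕ) : ℂ) ^ (-(2 : ℂ) * s)) := by
  haveI : NeZero Q := ⟨hQ.ne'⟩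
  set w : ℂ := -(2 : ℂ) * s with hw
  have hwre : w.re = -2 * s.re := by
    rw [hw]
    simp [Complex.mul_re]
  have hwlt : w.re < -1 := by rw [hwre]; linarith
  have hw0 : w ≠ 0 := fun h => by rw [h] at hwre; simp at hwre; linarith
  -- the multiplicative function
  set f : ℕ → ℂ := fun k => ψ (k : ZMod Q) * ((moebius k : ℤ) : ℂ) * (k : ℂ) ^ w with hf
  have hf0 : f 0 = 0 := by simp [hf]
  have hf1 : f 1 = 1 := by simp [hf]
  have hψmul : ∀ a b : ℕ, ψ ((a * b : ℕ) : ZMod Q) = ψ (a : ZMod Q) * ψ (b : ZMod Q) := by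
    intro a b; rw [Nat.cast_mul, map_mul]
  have hcpowmul : ∀ a b : ℕ, ((a * b : ℕ) : ℂ) ^ w = (a : ℂ) ^ w * (b : ℂ) ^ w := by
    intro a b; rw [Nat.cast_mul]; exact Complex.natCast_mul_natCast_cpow a b w
  have hmul : ∀ {a b : ℕ}, Nat.Coprime a b → f (a * b) = f a * f b := by
    intro a b hab
    simp only [hf]
    rw [hψmul, hcpowmul, isMultiplicative_moebius.map_mul_of_coprime hab]
    push_cast
    ring
  have hψle : ∀ k : ℕ, ‖ψ (k : ZMod Q)‖ ≤ 1 := fun k => ψ.norm_le_one _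
  have hμle : ∀ k : ℕ, ‖((moebius k : ℤ) : ℂ)‖ ≤ 1 := by
    intro k
    rw [Complex.norm_intCast, ← Int.cast_abs]
    have := abs_moebius_le_one (n := k)
    exact_mod_cast this
  have hfnorm : Summable (fun k : ℕ => ‖f k‖) := by
    refine Summable.of_nonneg_of_le (fun k => norm_nonneg _) (fun k => ?_)
      (Real.summable_nat_rpow.mpr hwlt)
    rcases Nat.eq_zero_or_pos k with rfl | hk
    · simp [hf0, Real.zero_rpow (by intro h; rw [h] at hwlt; linarith : w.re ≠ 0)]
    · rw [hf]
      simp only [norm_mul]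
      rw [Complex.norm_natCast_cpow_of_pos hk]
      calc ‖ψ (k : ZMod Q)‖ * ‖((moebius k : ℤ) : ℂ)‖ * (k : ℝ) ^ w.re
          ≤ 1 * 1 * (k : ℝ) ^ w.re := by
            apply mul_le_mul_of_nonneg_right _ (Real.rpow_nonneg (Nat.cast_nonneg k) _)
            exact mul_le_mul (hψle k) (hμle k) (norm_nonneg _) zero_le_one
        _ = (k : ℝ) ^ w.re := by ring
  have hEuler := EulerProduct.eulerProduct_hasProd hf1 hmul hfnorm hf0
  -- identify the Euler factors
  have hfac : ∀ p : Nat.Primes, (∑' e : ℕ, f ((p : ℕ) ^ e)) =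
      1 - ψ ((p : ℕ) : ZMod Q) * ((p : ℕ) : ℂ) ^ w := by
    intro p
    have hvanish : ∀ e ∉ Finset.range 2, f ((p : ℕ) ^ e) = 0 := by
      intro e he
      have he2 : 2 ≤ e := by simp at he; omega
      have : moebius ((p : ℕ) ^ e) = 0 := by
        rw [moebius_apply_prime_pow p.prop (by omega : e ≠ 0)]
        rw [if_neg (by omega)]
      rw [hf]
      simp [this]
    rw [tsum_eq_sum hvanish]
    rw [Finset.sum_range_succ, Finset.sum_range_succ, Finset.sum_range_zero, pow_zero, pow_one,
      hf1, hf]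
    simp only
    rw [moebius_apply_prime p.prop]
    push_cast
    ring
  -- restrict the product to primes not dividing Q
  set P : Nat.Primes → ℂ := fun p => 1 - ψ ((p : ℕ) : ZMod Q) * ((p : ℕ) : ℂ) ^ w with hP
  rw [show (fun p : Nat.Primes => ∑' e : ℕ, f ((p : ℕ) ^ e)) = P from funext hfac] at hEuler
  have hψ0 : ∀ k : ℕ, ¬ Nat.Coprime k Q → ψ (k : ZMod Q) = 0 := by
    intro k hk
    exact ψ.map_nonunit (fun hu => hk ((ZMod.isUnit_iff_coprime k Q).mp hu))
  set j : {p : ℕ // p.Prime ∧ ¬ p ∣ Q} → Nat.Primes := fun p => ⟨p.1, p.2.1⟩ with hj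
  have hjinj : Function.Injective j := by
    intro a b h
    exact Subtype.ext (congrArg (Subtype.val : Nat.Primes → ℕ) h)
  have hP1 : ∀ q ∉ Set.range j, P q = 1 := by
    intro q hq
    have hdvd : (q : ℕ) ∣ Q := by
      by_contra hnd
      exact hq ⟨⟨q.1, q.prop, hnd⟩, rfl⟩
    have hnc : ¬ Nat.Coprime (q : ℕ) Q := by
      intro hcop
      exact q.prop.one_lt.ne' (hcop.eq_one_of_dvd hdvd)
    rw [hP]
    simp [hψ0 _ hnc]
  have hProd : HasProd (P ∘ j) (∑' k, f k) := (hjinj.hasProd_iff hP1).mpr hEuler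
  set T : ℂ := ∑' k, f k with hT
  -- the summand expansion
  set A : ℕ → ℕ → ℂ := fun m C =>
    if m ∣ C then ψ (C : ZMod Q) * ((moebius (C / m) : ℤ) : ℂ) * m * (C : ℂ) ^ w else 0 with hA
  have hGA : ∀ C : ℕ, (if 1 ≤ C ∧ Nat.Coprime C Q then
      ψ (C : ZMod Q) * ramanujanSum C (n : ℤ) * (C : ℂ) ^ w else 0) = ∑ m ∈ n.divisors, A m C := by
    intro C
    rcases Nat.eq_zero_or_pos C with rfl | hC
    · rw [if_neg (by simp)]
      refine (Finset.sum_eq_zero fun m hm => ?_).symm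
      simp only [hA]
      simp [Complex.zero_cpow hw0]
    · by_cases hcop : Nat.Coprime C Q
      · rw [if_pos ⟨hC, hcop⟩, ramanujanSum_expand C n hC hn, Finset.mul_sum, Finset.sum_mul]
        refine Finset.sum_congr rfl fun m hm => ?_
        simp only [hA]
        split
        · ring
        · simp
      · rw [if_neg (by tauto)]
        refine (Finset.sum_eq_zero fun m hm => ?_).symm
        simp only [hA]
        simp [hψ0 C hcop]
  have key : ∀ m ∈ n.divisors,
      Summable (fun C => ‖A m C‖) ∧
        ∑' C, A m C = (ψ (m : ZMod Q) * m * (m : ℂ) ^ w) * T := by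
    intro m hm
    have hmpos : 0 < m := Nat.pos_of_mem_divisors hm
    have hι : Function.Injective (fun k : ℕ => m * k) := fun a b h =>
      Nat.eq_of_mul_eq_mul_left hmpos h
    have hvan : ∀ C ∉ Set.range (fun k : ℕ => m * k), A m C = 0 := by
      intro C hC
      simp only [hA]
      rw [if_neg]
      intro hdvd
      exact hC ⟨C / m, Nat.mul_div_cancel' hdvd⟩
    have hcomp : ∀ k : ℕ, A m (m * k) = (ψ (m : ZMod Q) * m * (m : ℂ) ^ w) * f k := by
      intro k
      rcases Nat.eq_zero_or_pos k with rfl | hk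
      · simp only [hA]
        simp [hf0, Complex.zero_cpow hw0]
      · simp only [hA]
        rw [if_pos (Dvd.intro k rfl), hψmul, hcpowmul,
          Nat.mul_div_cancel_left k hmpos, hf]
        ring
    constructor
    · rw [← Function.Injective.summable_iff hι (fun C hC => by rw [hvan C hC, norm_zero])]
      have heq : ((fun C => ‖A m C‖) ∘ fun k : ℕ => m * k)
          = fun k => ‖ψ (m : ZMod Q) * m * (m : ℂ) ^ w‖ * ‖f k‖ := by
        funext k
        simp only [Function.comp_apply, hcomp k, norm_mul]
      rw [heq]
      exact hfnorm.mul_left _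
    · rw [← Function.Injective.tsum_eq hι (Function.support_subset_iff'.mpr hvan)]
      have heq : (fun k : ℕ => A m (m * k))
          = fun k => (ψ (m : ZMod Q) * m * (m : ℂ) ^ w) * f k := funext hcomp
      calc ∑' k : ℕ, A m (m * k) = ∑' k : ℕ, (ψ (m : ZMod Q) * m * (m : ℂ) ^ w) * f k := by
            rw [heq]
        _ = (ψ (m : ZMod Q) * m * (m : ℂ) ^ w) * T := by rw [tsum_mul_left, hT]
  -- summability of the series
  have hsumm : Summable (fun C : ℕ => ‖(if 1 ≤ C ∧ Nat.Coprime C Q then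
      ψ (C : ZMod Q) * ramanujanSum C (n : ℤ) * (C : ℂ) ^ w else 0)‖) := by
    refine Summable.of_nonneg_of_le (fun C => norm_nonneg _) (fun C => ?_)
      (summable_sum (f := fun m C => ‖A m C‖) fun m hm => (key m hm).1)
    rw [hGA C]
    exact norm_sum_le _ _
  have hsummG : Summable (fun C : ℕ => if 1 ≤ C ∧ Nat.Coprime C Q then
      ψ (C : ZMod Q) * ramanujanSum C (n : ℤ) * (C : ℂ) ^ w else 0) := by
    refine Summable.of_norm ?_
    exact hsumm
  refine ⟨hsumm, hProd.multipliable, ?_⟩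
  -- compute the sum
  have hsum1 : (∑' C : ℕ, if 1 ≤ C ∧ Nat.Coprime C Q then
      ψ (C : ZMod Q) * ramanujanSum C (n : ℤ) * (C : ℂ) ^ w else 0)
      = ∑ m ∈ n.divisors, (ψ (m : ZMod Q) * m * (m : ℂ) ^ w) * T := by
    rw [tsum_congr hGA, Summable.tsum_finsetSum (fun m hm => ((key m hm).1.of_norm))]
    exact Finset.sum_congr rfl fun m hm => (key m hm).2
  have hδ : ∀ m ∈ n.divisors, (if Nat.Coprime m Q then
      ψ (m : ZMod Q) * (m : ℂ) ^ ((1 : ℂ) - 2 * s) else 0)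
      = ψ (m : ZMod Q) * m * (m : ℂ) ^ w := by
    intro m hm
    have hmpos : 0 < m := Nat.pos_of_mem_divisors hm
    have hm0 : (m : ℂ) ≠ 0 := Nat.cast_ne_zero.mpr hmpos.ne'
    by_cases hcop : Nat.Coprime m Q
    · rw [if_pos hcop]
      rw [show (1 : ℂ) - 2 * s = 1 + w by rw [hw]; ring, Complex.cpow_add _ _ hm0,
        Complex.cpow_one]
      ring
    · rw [if_neg hcop, hψ0 m hcop]
      ring
  rw [hsum1, Finset.sum_congr rfl hδ, ← Finset.sum_mul]
  congr 1
  exact hProd.tprod_eq.symm
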